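/- For every k ≥ 2 there exists a triangle-free graph with chromatic number at least k. -/

import Mathlib

open SimpleGraph

namespace MycAux

variable {V : Type}

/-- adjacency of the Mycielskian -/
def mycAdj (G : SimpleGraph V) : (V ⊕ V ⊕ Unit) → (V ⊕ V ⊕ Unit) → Prop
  | Sum.inl u, Sum.inl v => G.Adj u v
  | Sum.inl u, Sum.inr (Sum.inl v) => G.Adj u v
  | Sum.inr (Sum.inl u), Sum.inl v => G.Adj u v
  | Sum.inr (Sum.inl _), Sum.inr (Sum.inr _) => True
  | Sum.inr (Sum.inr _), Sum.inr (Sum.inl _) => True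
  | _, _ => False

/-- the Mycielskian -/
def myc (G : SimpleGraph V) : SimpleGraph (V ⊕ V ⊕ Unit) where
  Adj := mycAdj G
  symm := by
    constructor
    rintro (u|u|u) (v|v|v) h <;>
      first
        | exact h.elim
        | exact G.adj_symm h
        | trivial
  loopless := by
    constructor
    rintro (u|u|u) h
    · exact G.loopless.irrefl u h
    · exact h
    · exact h

lemma adj_inl {G : SimpleGraph V} {u v : V} (h : G.Adj u v) :
    (myc G).Adj (Sum.inl u) (Sum.inl v) := h

lemma adj_copy_inl {G : SimpleGraph V} {u v : V} (h : G.Adj u v) :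
    (myc G).Adj (Sum.inr (Sum.inl u)) (Sum.inl v) := h

lemma adj_copy_apex (G : SimpleGraph V) (u : V) :
    (myc G).Adj (Sum.inr (Sum.inl u)) (Sum.inr (Sum.inr ())) := trivial

lemma myc_cliqueFree {G : SimpleGraph V} (hG : G.CliqueFree 3) :
    (myc G).CliqueFree 3 := by
  classical
  intro s hs
  rw [is3Clique_iff] at hs
  obtain ⟨a, b, c, hab, hac, hbc, -⟩ := hs
  rcases a with u | u | u <;> rcases b with v | v | v <;> rcases c with w | w | w <;>
    first
      | exact hab.elim
      | exact hac.elim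
      | exact hbc.elim
      | exact hG _ (is3Clique_triple_iff.2 ⟨hab, hac, hbc⟩)

lemma myc_not_colorable {G : SimpleGraph V} {n : ℕ} (h : ¬ G.Colorable n) :
    ¬ (myc G).Colorable (n + 1) := by
  rintro ⟨c⟩
  apply h
  classical
  set a : Fin (n + 1) := c (Sum.inr (Sum.inr ())) with ha
  have hcopy : ∀ v : V, c (Sum.inr (Sum.inl v)) ≠ a :=
    fun v => c.valid (adj_copy_apex G v)
  let f : V → {x : Fin (n + 1) // x ≠ a} := fun v =>
    if hv : c (Sum.inl v) = a then ⟨c (Sum.inr (Sum.inl v)), hcopy v⟩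
    else ⟨c (Sum.inl v), hv⟩
  have hvalid : ∀ {v w : V}, G.Adj v w → f v ≠ f w := by
    intro v w hvw hfeq
    rw [Subtype.ext_iff] at hfeq
    by_cases h1 : c (Sum.inl v) = a <;> by_cases h2 : c (Sum.inl w) = a <;>
      simp only [f, h1, h2, dif_pos, dif_neg, not_false_iff] at hfeq
    · exact c.valid (adj_inl hvw) (h1.trans h2.symm)
    · exact c.valid (adj_copy_inl hvw) hfeq
    · exact c.valid (adj_copy_inl hvw.symm) hfeq.symm
    · exact c.valid (adj_inl hvw) hfeq
  have C : G.Coloring {x : Fin (n + 1) // x ≠ a} := Coloring.mk f hvalid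
  have hcard : Fintype.card {x : Fin (n + 1) // x ≠ a} = n := by
    rw [Fintype.card_subtype_compl, Fintype.card_subtype_eq, Fintype.card_fin]
    omega
  have := C.colorable
  rwa [hcard] at this

lemma key : ∀ k : ℕ, 2 ≤ k →
    ∃ (V : Type) (G : SimpleGraph V), G.CliqueFree 3 ∧ ¬ G.Colorable (k - 1) := by
  intro k hk
  induction k, hk using Nat.le_induction with
  | base =>
    refine ⟨Bool, ⊤, ?_, ?_⟩
    · apply cliqueFree_of_card_lt
      simp
    · intro h
      rw [show (2 : ℕ) - 1 = 1 from rfl] at h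
      obtain ⟨c⟩ := h
      exact c.valid (by simp : (⊤ : SimpleGraph Bool).Adj true false)
        (Subsingleton.elim _ _)
  | succ n hn ih =>
    obtain ⟨V, G, hfree, hcol⟩ := ih
    refine ⟨_, myc G, myc_cliqueFree hfree, ?_⟩
    have : n - 1 + 1 = n + 1 - 1 := by omega
    rw [← this]
    exact myc_not_colorable hcol

end MycAux

/-- For every `k ≥ 2` there exists a triangle-free graph with chromatic number
at least `k`. -/
theorem exists_triangleFree_chromatic_ge (k : ℕ) (hk : 2 ≤ k) :
    ∃ (V : Type) (G : SimpleGraph V),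
      G.CliqueFree 3 ∧ (k : ℕ∞) ≤ G.chromaticNumber := by
  obtain ⟨V, G, hfree, hcol⟩ := MycAux.key k hk
  refine ⟨V, G, hfree, ?_⟩
  have h1 : ¬ (G.chromaticNumber ≤ (k - 1 : ℕ)) := by
    rw [chromaticNumber_le_iff_colorable]; exact hcol
  have h2 : ((k - 1 : ℕ) : ℕ∞) < G.chromaticNumber := lt_of_not_ge h1
  have h3 : ((k - 1 : ℕ) : ℕ∞) + 1 ≤ G.chromaticNumber :=
    Order.add_one_le_of_lt h2
  have h4 : ((k - 1 : ℕ) : ℕ∞) + 1 = (k : ℕ∞) := by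
    have hkk : k - 1 + 1 = k := by omega
    rw [show (1 : ℕ∞) = ((1 : ℕ) : ℕ∞) from rfl, ← Nat.cast_add, hkk]
  rwa [h4] at h3
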